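/- Let C be a pointed regular category with coequalizers that is factor permutable. Then C satisfies property (P): products of coequalizer diagrams are coequalizer diagrams. (One may use the weak shifting lemma: for equivalence relations R, S on a product A × B with Eq(π₁) ∩ R ≤ S, if (a,c) S (d,f), (a,c) R (d,f), (a,b) R (d,e), and the pairs (a,b),(a,c) and (d,e),(d,f) are each Eq(π₁)-related, then (a,b) S (d,e).) -/

import Mathlib

open CategoryTheory Limits

/-- `q` is a coequalizer of the parallel pair `(u, v)`. -/
def IsCoeq {C : Type*} [Category C] {T X Q : C} (u v : T ⟶ X) (q : X ⟶ Q) : Prop :=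
  ∃ h : u ≫ q = v ≫ q, Nonempty (IsColimit (Cofork.ofπ q h))

/-- Property (P): the product of two coequalizer diagrams is a coequalizer diagram. -/
def PropertyP (C : Type*) [Category C] [HasBinaryProducts C] : Prop :=
  ∀ {T₁ T₂ X X' Y Y' : C} (u v : T₁ ⟶ X) (u' v' : T₂ ⟶ Y) (q₁ : X ⟶ X') (q₂ : Y ⟶ Y'),
    IsCoeq u v q₁ → IsCoeq u' v' q₂ →
      IsCoeq (prod.map u u') (prod.map v v') (prod.map q₁ q₂)

/-- A regular epimorphism: a coequalizer of some parallel pair. -/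
def IsRegEpi {C : Type*} [Category C] {X Q : C} (q : X ⟶ Q) : Prop :=
  ∃ (T : C) (a b : T ⟶ X), IsCoeq a b q

/-- A generalized element `m : S ⟶ X` belongs to the (sub)object `r : R ⟶ X` if it
factors through `r`. -/
def Factors {C : Type*} [Category C] {R X S : C} (r : R ⟶ X) (m : S ⟶ X) : Prop :=
  ∃ h : S ⟶ R, h ≫ r = m

/-- The relation on generalized elements determined by a relation `r : R ⟶ X ⨯ X`. -/
def ERel {C : Type*} [Category C] [HasBinaryProducts C] {R X S : C}
    (r : R ⟶ X ⨯ X) (a b : S ⟶ X) : Prop :=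
  Factors r (prod.lift a b)

/-- `r : R ⟶ X ⨯ X` is an (internal) equivalence relation: a monomorphism whose
induced relation on generalized elements is reflexive, symmetric and transitive. -/
def IsEquivRel {C : Type*} [Category C] [HasBinaryProducts C] {R X : C}
    (r : R ⟶ X ⨯ X) : Prop :=
  Mono r ∧ (∀ {S : C} (a : S ⟶ X), ERel r a a) ∧
    (∀ {S : C} (a b : S ⟶ X), ERel r a b → ERel r b a) ∧
    (∀ {S : C} (a b c : S ⟶ X), ERel r a b → ERel r b c → ERel r a c)

/-- The composite `R₂ ∘ R₁` of two relations on `X`, on generalized elements, in the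
internal logic of a regular category: `a (R₂ ∘ R₁) c` iff locally (i.e. after
precomposing with a regular epimorphism) there is `b` with `a R₁ b` and `b R₂ c`. -/
def CompRelInt {C : Type*} [Category C] [HasBinaryProducts C] {R₁' R₂' X S : C}
    (R₂ : R₂' ⟶ X ⨯ X) (R₁ : R₁' ⟶ X ⨯ X) (a c : S ⟶ X) : Prop :=
  ∃ (S' : C) (e : S' ⟶ S), IsRegEpi e ∧
    ∃ b : S' ⟶ X, ERel R₁ (e ≫ a) b ∧ ERel R₂ b (e ≫ c)

/-- The kernel pair of a morphism `f`, as a relation `Eq(f) ⟶ X ⨯ X`. -/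
noncomputable def kerRel {C : Type*} [Category C] [HasFiniteLimits C] {X Y : C}
    (f : X ⟶ Y) : pullback f f ⟶ X ⨯ X :=
  prod.lift (pullback.fst f f) (pullback.snd f f)

/-- Factor permutability: every factor relation (kernel pair of a product
projection) permutes with every equivalence relation on the same object. -/
def FactorPermutable (C : Type*) [Category C] [HasFiniteLimits C] : Prop :=
  ∀ {A B E' : C} (E : E' ⟶ (A ⨯ B) ⨯ (A ⨯ B)), IsEquivRel E →
    ∀ {S : C} (a c : S ⟶ A ⨯ B),
      CompRelInt E (kerRel (prod.fst : A ⨯ B ⟶ A)) a c ↔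
        CompRelInt (kerRel (prod.fst : A ⨯ B ⟶ A)) E a c

attribute [local simp] prod.lift_fst prod.lift_snd prod.lift_fst_assoc prod.lift_snd_assoc pullback.lift_fst pullback.lift_snd pullback.lift_fst_assoc pullback.lift_snd_assoc

section Aux

variable {C : Type*} [Category C]

theorem isRegEpi_epi {X Q : C} {q : X ⟶ Q} (h : IsRegEpi q) : Epi q := by
  obtain ⟨T, a, b, w, ⟨hc⟩⟩ := h
  have : Epi (Cofork.ofπ q w).π := epi_of_isColimit_cofork hc
  simpa using this

theorem IsCoeq.desc {T X Q Z : C} {u v : T ⟶ X} {q : X ⟶ Q} (hc : IsCoeq u v q)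
    (t : X ⟶ Z) (ht : u ≫ t = v ≫ t) : ∃ s : Q ⟶ Z, q ≫ s = t := by
  obtain ⟨w, ⟨hcol⟩⟩ := hc
  obtain ⟨l, hl⟩ := Cofork.IsColimit.desc' hcol t ht
  exact ⟨l, by simpa using hl⟩

theorem isCoeq_of_exists {T X Q : C} (u v : T ⟶ X) (q : X ⟶ Q) (w : u ≫ q = v ≫ q)
    (hq : Epi q)
    (H : ∀ {Z : C} (t : X ⟶ Z), u ≫ t = v ≫ t → ∃ s : Q ⟶ Z, q ≫ s = t) :
    IsCoeq u v q := by
  refine ⟨w, ⟨Cofork.IsColimit.mk _ (fun s => (H s.π s.condition).choose)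
    (fun s => by simpa using (H s.π s.condition).choose_spec) (fun s m hm => ?_)⟩⟩
  have h1 := (H s.π s.condition).choose_spec
  simp only [Cofork.π_ofπ] at hm
  rw [← cancel_epi q, hm, h1]

theorem isRegEpi_id (X : C) : IsRegEpi (𝟙 X) :=
  ⟨X, 𝟙 X, 𝟙 X, isCoeq_of_exists _ _ _ rfl inferInstance
    (fun t _ => ⟨t, Category.id_comp t⟩)⟩

theorem isCoeq_kernelPair [HasFiniteLimits C] {X Q : C} {g : X ⟶ Q} (hg : IsRegEpi g) :
    IsCoeq (pullback.fst g g) (pullback.snd g g) g := by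
  obtain ⟨T, a, b, hab⟩ := hg
  refine isCoeq_of_exists _ _ _ pullback.condition (isRegEpi_epi ⟨T, a, b, hab⟩) ?_
  intro Z t ht
  refine hab.desc t ?_
  have h1 : a ≫ t = (pullback.lift a b hab.1 ≫ pullback.fst g g) ≫ t := by
    rw [pullback.lift_fst]
  have h2 : b ≫ t = (pullback.lift a b hab.1 ≫ pullback.snd g g) ≫ t := by
    rw [pullback.lift_snd]
  rw [h1, h2, Category.assoc, Category.assoc, ht]

theorem isRegEpi_iso_comp {W X Q : C} (i : W ≅ X) {e : X ⟶ Q} (he : IsRegEpi e) :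
    IsRegEpi (i.hom ≫ e) := by
  obtain ⟨T, a, b, hab⟩ := he
  haveI : Epi e := isRegEpi_epi ⟨T, a, b, hab⟩
  refine ⟨T, a ≫ i.inv, b ≫ i.inv, isCoeq_of_exists _ _ _ ?_ ?_ ?_⟩
  · simp [hab.1]
  · exact epi_comp _ _
  · intro Z t ht
    obtain ⟨s, hs⟩ := hab.desc (i.inv ≫ t) (by
      rw [← Category.assoc, ← Category.assoc]
      simpa using ht)
    exact ⟨s, by rw [Category.assoc, hs, Iso.hom_inv_id_assoc]⟩

theorem isRegEpi_comp_iso {X Q Q' : C} {e : X ⟶ Q} (he : IsRegEpi e) (i : Q ≅ Q') :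
    IsRegEpi (e ≫ i.hom) := by
  obtain ⟨T, a, b, hab⟩ := he
  haveI : Epi e := isRegEpi_epi ⟨T, a, b, hab⟩
  refine ⟨T, a, b, isCoeq_of_exists _ _ _ ?_ ?_ ?_⟩
  · rw [← Category.assoc, ← Category.assoc, hab.1]
  · exact epi_comp _ _
  · intro Z t ht
    obtain ⟨s, hs⟩ := hab.desc t ht
    exact ⟨i.inv ≫ s, by rw [Category.assoc, Iso.hom_inv_id_assoc, hs]⟩

theorem isRegEpi_comp [HasFiniteLimits C]
    (hstab : ∀ {X Y Z : C} (f : X ⟶ Z) (g : Y ⟶ Z), IsRegEpi f →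
      IsRegEpi (pullback.snd f g))
    {A B D : C} {f : A ⟶ B} {g : B ⟶ D} (hf : IsRegEpi f) (hg : IsRegEpi g) :
    IsRegEpi (f ≫ g) := by
  have hfc := isCoeq_kernelPair hf
  have hgc := isCoeq_kernelPair hg
  haveI hfe : Epi f := isRegEpi_epi hf
  haveI hge : Epi g := isRegEpi_epi hg
  have hfg : (pullback.fst f f) ≫ f ≫ g = (pullback.snd f f) ≫ f ≫ g := by
    rw [← Category.assoc, ← Category.assoc, pullback.condition]
  refine ⟨pullback (f ≫ g) (f ≫ g), pullback.fst _ _, pullback.snd _ _,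
    isCoeq_of_exists _ _ _ pullback.condition (epi_comp _ _) ?_⟩
  intro Z t ht
  -- kernel pair of f is contained in kernel pair of f ≫ g
  have h1 : pullback.fst f f ≫ t = pullback.snd f f ≫ t := by
    have := congrArg (fun m => pullback.lift (pullback.fst f f) (pullback.snd f f) hfg ≫ m) ht
    simpa using this
  obtain ⟨s, hs⟩ := hfc.desc t h1
  -- now show the kernel pair of g coequalizes s
  set w₁ := pullback.fst g g
  set w₂ := pullback.snd g g
  have e₁re : IsRegEpi (pullback.snd f w₁) := hstab f w₁ hf
  have e₂re : IsRegEpi (pullback.snd f (pullback.snd f w₁ ≫ w₂)) :=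
    hstab f (pullback.snd f w₁ ≫ w₂) hf
  haveI he₁ : Epi (pullback.snd f w₁) := isRegEpi_epi e₁re
  haveI he₂ : Epi (pullback.snd f (pullback.snd f w₁ ≫ w₂)) := isRegEpi_epi e₂re
  set e₁ := pullback.snd f w₁
  set e₂ := pullback.snd f (e₁ ≫ w₂)
  set v₁ := pullback.fst f w₁
  set v₂ := pullback.fst f (e₁ ≫ w₂)
  have hcomm : (e₂ ≫ v₁) ≫ f ≫ g = v₂ ≫ f ≫ g := by
    have c1 : v₁ ≫ f = e₁ ≫ w₁ := pullback.condition
    have c2 : v₂ ≫ f = e₂ ≫ (e₁ ≫ w₂) := pullback.condition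
    have c3 : w₁ ≫ g = w₂ ≫ g := pullback.condition
    rw [Category.assoc, ← Category.assoc v₂ f g, c2, Category.assoc, Category.assoc,
      ← Category.assoc v₁ f g, c1, Category.assoc, c3]
  have hαβ : (e₂ ≫ v₁) ≫ t = v₂ ≫ t := by
    have := congrArg (fun m => pullback.lift (e₂ ≫ v₁) v₂ hcomm ≫ m) ht
    simpa using this
  have hw : w₁ ≫ s = w₂ ≫ s := by
    have c1 : v₁ ≫ f = e₁ ≫ w₁ := pullback.condition
    have c2 : v₂ ≫ f = e₂ ≫ (e₁ ≫ w₂) := pullback.condition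
    have l1 : e₂ ≫ e₁ ≫ w₁ ≫ s = e₂ ≫ e₁ ≫ w₂ ≫ s := by
      have r1 : (e₂ ≫ v₁) ≫ t = e₂ ≫ e₁ ≫ w₁ ≫ s := by
        rw [Category.assoc, ← hs, ← Category.assoc v₁ f s, c1, Category.assoc]
      have r2 : v₂ ≫ t = e₂ ≫ e₁ ≫ w₂ ≫ s := by
        rw [← hs, ← Category.assoc v₂ f s, c2, Category.assoc, Category.assoc]
      rw [← r1, ← r2, hαβ]
    rwa [cancel_epi e₂, cancel_epi e₁] at l1
  obtain ⟨r, hr⟩ := hgc.desc s hw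
  exact ⟨r, by rw [Category.assoc, hr, hs]⟩

theorem factors_kerRel [HasFiniteLimits C] {X Y S : C} (f : X ⟶ Y) (a b : S ⟶ X) :
    Factors (kerRel f) (prod.lift a b) ↔ a ≫ f = b ≫ f := by
  constructor
  · rintro ⟨h, hh⟩
    have ha : h ≫ pullback.fst f f = a := by
      have := congrArg (· ≫ (prod.fst : X ⨯ X ⟶ X)) hh
      simpa [kerRel] using this
    have hb : h ≫ pullback.snd f f = b := by
      have := congrArg (· ≫ (prod.snd : X ⨯ X ⟶ X)) hh
      simpa [kerRel] using this
    rw [← ha, ← hb, Category.assoc, Category.assoc, pullback.condition]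
  · intro h
    exact ⟨pullback.lift a b h, by simp [kerRel]⟩

theorem isEquivRel_kerRel [HasFiniteLimits C] {X Y : C} (f : X ⟶ Y) :
    IsEquivRel (kerRel f) := by
  refine ⟨⟨fun g h hgh => ?_⟩, fun a => ?_, fun a b hab => ?_, fun a b c hab hbc => ?_⟩
  · apply pullback.hom_ext
    · have := congrArg (· ≫ (prod.fst : X ⨯ X ⟶ X)) hgh
      simpa [kerRel] using this
    · have := congrArg (· ≫ (prod.snd : X ⨯ X ⟶ X)) hgh
      simpa [kerRel] using this
  · exact (factors_kerRel f a a).2 rfl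
  · exact (factors_kerRel f b a).2 ((factors_kerRel f a b).1 hab).symm
  · exact (factors_kerRel f a c).2
      (((factors_kerRel f a b).1 hab).trans ((factors_kerRel f b c).1 hbc))

theorem isRegEpi_prodMap_left [HasFiniteLimits C]
    (hstab : ∀ {X Y Z : C} (f : X ⟶ Z) (g : Y ⟶ Z), IsRegEpi f →
      IsRegEpi (pullback.snd f g))
    {X X' Y : C} {f : X ⟶ X'} (hf : IsRegEpi f) :
    IsRegEpi (prod.map f (𝟙 Y)) := by
  have h := hstab f (prod.fst : X' ⨯ Y ⟶ X') hf
  let j : X ⨯ Y ≅ pullback f (prod.fst : X' ⨯ Y ⟶ X') :=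
    { hom := pullback.lift prod.fst (prod.map f (𝟙 Y)) (by simp)
      inv := prod.lift (pullback.fst _ _) (pullback.snd _ _ ≫ prod.snd)
      hom_inv_id := by apply Limits.prod.hom_ext <;> simp
      inv_hom_id := by
        apply pullback.hom_ext
        · simp
        · apply Limits.prod.hom_ext
          · simp [pullback.condition]
          · simp }
  have h2 := isRegEpi_iso_comp j h
  have hj : j.hom ≫ pullback.snd f (prod.fst : X' ⨯ Y ⟶ X') = prod.map f (𝟙 Y) :=
    pullback.lift_snd _ _ _
  rwa [hj] at h2

/-- The core application of factor permutability. -/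
theorem coreL [HasFiniteLimits C] (hFP : FactorPermutable C)
    {A B Q Z S : C} [HasZeroMorphisms C] (q : A ⟶ Q) (t : A ⨯ B ⟶ Z)
    (x x' : S ⟶ A) (y : S ⟶ B) (hq : x ≫ q = x' ≫ q)
    (h0 : prod.lift x (0 : S ⟶ B) ≫ t = prod.lift x' 0 ≫ t) :
    prod.lift x y ≫ t = prod.lift x' y ≫ t := by
  set w : A ⨯ B ⟶ Z ⨯ (Q ⨯ B) :=
    prod.lift t (prod.lift (prod.fst ≫ q) prod.snd) with hw
  have hE := isEquivRel_kerRel w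
  have h1 : CompRelInt (kerRel w) (kerRel (prod.fst : A ⨯ B ⟶ A))
      (prod.lift x y) (prod.lift x' 0) := by
    refine ⟨S, 𝟙 S, isRegEpi_id S, prod.lift x 0, ?_, ?_⟩
    · exact (factors_kerRel _ _ _).2 (by simp)
    · refine (factors_kerRel _ _ _).2 ?_
      rw [Category.id_comp]
      apply Limits.prod.hom_ext
      · simpa [hw] using h0
      · apply Limits.prod.hom_ext
        · simp [hw, hq]
        · simp [hw]
  obtain ⟨S', e, he, b, hb1, hb2⟩ := (hFP (kerRel w) hE _ _).1 h1
  haveI : Epi e := isRegEpi_epi he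
  have hbw : (e ≫ prod.lift x y) ≫ w = b ≫ w := (factors_kerRel _ _ _).1 hb1
  have hbfst : b ≫ prod.fst = (e ≫ prod.lift x' 0) ≫ prod.fst :=
    (factors_kerRel _ _ _).1 hb2
  have hbsnd : b ≫ prod.snd = e ≫ y := by
    have := congrArg (· ≫ (prod.snd ≫ prod.snd : Z ⨯ (Q ⨯ B) ⟶ B)) hbw
    simpa [hw] using this.symm
  have hb : b = e ≫ prod.lift x' y := by
    apply Limits.prod.hom_ext
    · simpa using hbfst
    · simpa using hbsnd
  have hbt : (e ≫ prod.lift x y) ≫ t = b ≫ t := by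
    have := congrArg (· ≫ (prod.fst : Z ⨯ (Q ⨯ B) ⟶ Z)) hbw
    simpa [hw] using this
  rw [hb] at hbt
  rw [Category.assoc, Category.assoc] at hbt
  exact (cancel_epi e).1 hbt

end Aux

theorem stmt8 {C : Type*} [Category C] [HasFiniteLimits C] [HasCoequalizers C]
    [HasZeroObject C] [HasZeroMorphisms C]
    -- regularity: every morphism factors as a regular epi followed by a mono,
    -- and regular epimorphisms are stable under pullback
    (hfact : ∀ {X Y : C} (f : X ⟶ Y), ∃ (I : C) (e : X ⟶ I) (m : I ⟶ Y),
      IsRegEpi e ∧ Mono m ∧ e ≫ m = f)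
    (hstab : ∀ {X Y Z : C} (f : X ⟶ Z) (g : Y ⟶ Z), IsRegEpi f →
      IsRegEpi (pullback.snd f g))
    (hFP : FactorPermutable C) : PropertyP C := by
  intro T₁ T₂ X X' Y Y' u v u' v' q₁ q₂ hc₁ hc₂
  have hw₁ : u ≫ q₁ = v ≫ q₁ := hc₁.1
  have hw₂ : u' ≫ q₂ = v' ≫ q₂ := hc₂.1
  have hcond : prod.map u u' ≫ prod.map q₁ q₂ = prod.map v v' ≫ prod.map q₁ q₂ := by
    rw [prod.map_map, prod.map_map, hw₁, hw₂]
  -- prod.map q₁ q₂ is a regular epi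
  have hre1 : IsRegEpi (prod.map q₁ (𝟙 Y)) :=
    isRegEpi_prodMap_left hstab ⟨T₁, u, v, hc₁⟩
  have hre2' : IsRegEpi (prod.map q₂ (𝟙 X')) :=
    isRegEpi_prodMap_left hstab ⟨T₂, u', v', hc₂⟩
  have hre2 : IsRegEpi (prod.map (𝟙 X') q₂) := by
    have heq : prod.map (𝟙 X') q₂ =
        (prod.braiding X' Y).hom ≫ (prod.map q₂ (𝟙 X') ≫ (prod.braiding Y' X').hom) := by
      apply Limits.prod.hom_ext <;> simp
    rw [heq]
    exact isRegEpi_iso_comp _ (isRegEpi_comp_iso hre2' _)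
  have hre : IsRegEpi (prod.map q₁ q₂) := by
    have heq : prod.map q₁ q₂ = prod.map q₁ (𝟙 Y) ≫ prod.map (𝟙 X') q₂ := by
      rw [prod.map_map, Category.id_comp, Category.comp_id]
    rw [heq]
    exact isRegEpi_comp hstab hre1 hre2
  refine isCoeq_of_exists _ _ _ hcond (isRegEpi_epi hre) ?_
  intro Z t ht
  -- claim A for the first coordinate
  have hA : ∀ {S : C} (x x' : S ⟶ X), x ≫ q₁ = x' ≫ q₁ →
      prod.lift x (0 : S ⟶ Y) ≫ t = prod.lift x' 0 ≫ t := by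
    intro S x x' hx
    have e1 : prod.lift (𝟙 T₁) (0 : T₁ ⟶ T₂) ≫ prod.map u u' = prod.lift u 0 := by simp
    have e2 : prod.lift (𝟙 T₁) (0 : T₁ ⟶ T₂) ≫ prod.map v v' = prod.lift v 0 := by simp
    have key : prod.lift u (0 : T₁ ⟶ Y) ≫ t = prod.lift v 0 ≫ t := by
      rw [← e1, ← e2, Category.assoc, Category.assoc, ht]
    have e3 : ∀ {S' : C} (r : S' ⟶ X), r ≫ prod.lift (𝟙 X) (0 : X ⟶ Y) = prod.lift r 0 := by
      intro S' r; simp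
    obtain ⟨s, hs⟩ := hc₁.desc (prod.lift (𝟙 X) (0 : X ⟶ Y) ≫ t) (by
      rw [← Category.assoc, ← Category.assoc, e3, e3]; exact key)
    calc prod.lift x (0 : S ⟶ Y) ≫ t = x ≫ prod.lift (𝟙 X) 0 ≫ t := by
          rw [← Category.assoc, e3]
      _ = x ≫ q₁ ≫ s := by rw [hs]
      _ = x' ≫ q₁ ≫ s := by rw [← Category.assoc, hx, Category.assoc]
      _ = x' ≫ prod.lift (𝟙 X) 0 ≫ t := by rw [hs]
      _ = prod.lift x' 0 ≫ t := by rw [← Category.assoc, e3]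
  -- claim A for the second coordinate
  have hB : ∀ {S : C} (y y' : S ⟶ Y), y ≫ q₂ = y' ≫ q₂ →
      prod.lift (0 : S ⟶ X) y ≫ t = prod.lift 0 y' ≫ t := by
    intro S y y' hy
    have e1 : prod.lift (0 : T₂ ⟶ T₁) (𝟙 T₂) ≫ prod.map u u' = prod.lift 0 u' := by simp
    have e2 : prod.lift (0 : T₂ ⟶ T₁) (𝟙 T₂) ≫ prod.map v v' = prod.lift 0 v' := by simp
    have key : prod.lift (0 : T₂ ⟶ X) u' ≫ t = prod.lift 0 v' ≫ t := by
      rw [← e1, ← e2, Category.assoc, Category.assoc, ht]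
    have e3 : ∀ {S' : C} (r : S' ⟶ Y), r ≫ prod.lift (0 : Y ⟶ X) (𝟙 Y) = prod.lift 0 r := by
      intro S' r; simp
    obtain ⟨s, hs⟩ := hc₂.desc (prod.lift (0 : Y ⟶ X) (𝟙 Y) ≫ t) (by
      rw [← Category.assoc, ← Category.assoc, e3, e3]; exact key)
    calc prod.lift (0 : S ⟶ X) y ≫ t = y ≫ prod.lift (0 : Y ⟶ X) (𝟙 Y) ≫ t := by
          rw [← Category.assoc, e3]
      _ = y ≫ q₂ ≫ s := by rw [hs]
      _ = y' ≫ q₂ ≫ s := by rw [← Category.assoc, hy, Category.assoc]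
      _ = y' ≫ prod.lift (0 : Y ⟶ X) (𝟙 Y) ≫ t := by rw [hs]
      _ = prod.lift 0 y' ≫ t := by rw [← Category.assoc, e3]
  -- now the kernel pair of prod.map q₁ q₂ coequalizes t
  set g := prod.map q₁ q₂ with hg
  set p₁ := pullback.fst g g
  set p₂ := pullback.snd g g
  set x := p₁ ≫ (prod.fst : X ⨯ Y ⟶ X)
  set y := p₁ ≫ (prod.snd : X ⨯ Y ⟶ Y)
  set x' := p₂ ≫ (prod.fst : X ⨯ Y ⟶ X)
  set y' := p₂ ≫ (prod.snd : X ⨯ Y ⟶ Y)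
  have hqx : x ≫ q₁ = x' ≫ q₁ := by
    have := congrArg (· ≫ (prod.fst : X' ⨯ Y' ⟶ X')) (pullback.condition (f := g) (g := g))
    simpa [hg, x, x', p₁, p₂] using this
  have hqy : y ≫ q₂ = y' ≫ q₂ := by
    have := congrArg (· ≫ (prod.snd : X' ⨯ Y' ⟶ Y')) (pullback.condition (f := g) (g := g))
    simpa [hg, y, y', p₁, p₂] using this
  have step1 : prod.lift x y ≫ t = prod.lift x' y ≫ t :=
    coreL hFP q₁ t x x' y hqx (hA x x' hqx)
  have step2 : prod.lift x' y ≫ t = prod.lift x' y' ≫ t := by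
    have hbr : ∀ (a : pullback g g ⟶ X) (b : pullback g g ⟶ Y),
        prod.lift b a ≫ (prod.braiding Y X).hom = prod.lift a b := by
      intro a b; simp
    have h0' : prod.lift y (0 : pullback g g ⟶ X) ≫ ((prod.braiding Y X).hom ≫ t)
        = prod.lift y' 0 ≫ ((prod.braiding Y X).hom ≫ t) := by
      rw [← Category.assoc, ← Category.assoc, hbr, hbr]
      exact hB y y' hqy
    have := coreL hFP q₂ ((prod.braiding Y X).hom ≫ t) y y' x' hqy h0'
    rw [← Category.assoc, ← Category.assoc, hbr, hbr] at this
    exact this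
  have hp₁ : p₁ ≫ t = prod.lift x y ≫ t := by
    have : prod.lift x y = p₁ := by
      apply Limits.prod.hom_ext <;> simp [x, y]
    rw [this]
  have hp₂ : p₂ ≫ t = prod.lift x' y' ≫ t := by
    have : prod.lift x' y' = p₂ := by
      apply Limits.prod.hom_ext <;> simp [x', y']
    rw [this]
  have hker : p₁ ≫ t = p₂ ≫ t := by
    rw [hp₁, hp₂, step1, step2]
  exact (isCoeq_kernelPair hre).desc t hker
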